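/- Let t₀ ∈ k* be an element that is not a root of unity, let a, b > 1 be coprime integers, and let p = (x_p, y_p) ∈ k̄² with x_p·y_p ≠ 0. Let φ ∈ Aut(𝔸²) be the automorphism φ(q) = (t₀^a·q₁, t₀^b·q₂). Then the Zariski closure of the orbit O_φ(p) = {(t₀^{na}·x_p, t₀^{nb}·y_p) : n ∈ ℤ} in k̄² equals the curve {q ∈ k̄² : q₁^b·y_p^a = q₂^a·x_p^b}. -/

import Mathlib

open MvPolynomial

noncomputable section

/-- Points of the affine plane over the algebraic closure of `k`. -/
abbrev Pt (k : Type*) [Field k] : Type _ := Fin 2 → AlgebraicClosure k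

/-- Plane automorphisms over `k`, modeled as `k`-algebra automorphisms of `k[x,y]`. -/
abbrev PlaneAut (k : Type*) [Field k] : Type _ :=
  MvPolynomial (Fin 2) k ≃ₐ[k] MvPolynomial (Fin 2) k

/-- The embedding of `k` in its algebraic closure. -/
abbrev emb (k : Type*) [Field k] : k →+* AlgebraicClosure k :=
  algebraMap k (AlgebraicClosure k)

variable {k : Type*} [Field k]

/-- The action of a plane automorphism on the points of the plane over `k̄`:
the point map of `φ` is `q ↦ (f(q), g(q))` where `f = φ.symm X₀`, `g = φ.symm X₁`
(so that `actp` is a left action of the automorphism group on points). -/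
def actp (φ : PlaneAut k) (q : Pt k) : Pt k :=
  fun i => aeval q (φ.symm (X i))

/-- The Zariski closure of a set of points of `k̄²`: the zero locus of the ideal of all
polynomials with coefficients in `k̄` vanishing on it. -/
def zclos (Δ : Set (Pt k)) : Set (Pt k) :=
  zeroLocus (AlgebraicClosure k) (vanishingIdeal (k := AlgebraicClosure k) Δ)

/-- `Δ̂` : the zero locus in `k̄²` of the ideal `I_k(Δ)` of all polynomials with
coefficients in `k` vanishing on `Δ`. -/
def hatSet (Δ : Set (Pt k)) : Set (Pt k) :=
  {q | ∀ P : MvPolynomial (Fin 2) k, (∀ x ∈ Δ, aeval x P = 0) → aeval q P = 0}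

/-- Coordinatewise action of the Galois group `Gal(k̄/k)` on points of `k̄²`. -/
def galAct (g : AlgebraicClosure k ≃ₐ[k] AlgebraicClosure k) (q : Pt k) : Pt k :=
  fun i => g (q i)

/-- A subset of `k̄²` is Zariski closed iff it is the zero locus of an ideal of `k̄[x,y]`. -/
def IsZClosed (S : Set (Pt k)) : Prop :=
  ∃ I : Ideal (MvPolynomial (Fin 2) (AlgebraicClosure k)), S = zeroLocus (AlgebraicClosure k) I

/-- Irreducibility with respect to the Zariski topology on `k̄²`. -/
def IsZIrreducible (S : Set (Pt k)) : Prop :=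
  S.Nonempty ∧ ∀ Z₁ Z₂ : Set (Pt k), IsZClosed Z₁ → IsZClosed Z₂ → S ⊆ Z₁ ∪ Z₂ →
    (S ⊆ Z₁ ∨ S ⊆ Z₂)

/-- `C` is an irreducible component of `S` (for the Zariski topology on `k̄²`):
a maximal irreducible subset of `S`. -/
def IsIrredComponentOf (C S : Set (Pt k)) : Prop :=
  IsZIrreducible C ∧ C ⊆ S ∧ ∀ C' : Set (Pt k), IsZIrreducible C' → C' ⊆ S → C ⊆ C' → C = C'

/-- The stabilizer `Aut(𝔸², Δ)` of a set of points of `k̄²`, as a set of plane automorphisms. -/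
def stabSet (Δ : Set (Pt k)) : Set (PlaneAut k) :=
  {φ | actp φ '' Δ = Δ}

/-- The orbit `O_H(p)` of a point under a subgroup of plane automorphisms. -/
def orbSub (H : Subgroup (PlaneAut k)) (p : Pt k) : Set (Pt k) :=
  {q | ∃ h ∈ H, actp h p = q}

/-- The orbit `O_φ(p) = {φⁿ(p) : n ∈ ℤ}` of a point under a single plane automorphism. -/
def orbAut (φ : PlaneAut k) (p : Pt k) : Set (Pt k) :=
  {q | ∃ n : ℤ, actp (φ ^ n) p = q}

/-- The degree of a plane automorphism: the maximum of the total degrees of the two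
polynomials giving its point map. -/
def autDegree (φ : PlaneAut k) : ℕ :=
  max (φ.symm (X 0)).totalDegree (φ.symm (X 1)).totalDegree

/-- The torus `T = {(x,y) ↦ (t·x, t⁻¹·y) : t ∈ k*}`, as a set of plane automorphisms. -/
def torusT (k : Type*) [Field k] : Set (PlaneAut k) :=
  {φ | ∃ t : k, t ≠ 0 ∧ ∀ q : Pt k, actp φ q = ![emb k t * q 0, (emb k t)⁻¹ * q 1]}

end


noncomputable section AuxLemmas

open MvPolynomial

variable {k : Type*} [Field k]

lemma aeval_actp (ψ : PlaneAut k) (q : Pt k) (P : MvPolynomial (Fin 2) k) :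
    aeval (actp ψ q) P = aeval q (ψ.symm P) := by
  have h : (aeval (actp ψ q) : MvPolynomial (Fin 2) k →ₐ[k] AlgebraicClosure k)
      = (aeval q).comp ψ.symm.toAlgHom := by
    apply MvPolynomial.algHom_ext
    intro i
    simp [actp]
  exact DFunLike.congr_fun h P

lemma actp_mul (φ ψ : PlaneAut k) (q : Pt k) :
    actp (φ * ψ) q = actp φ (actp ψ q) := by
  funext i
  show aeval q ((φ * ψ).symm (X i)) = aeval (actp ψ q) (φ.symm (X i))
  rw [aeval_actp]
  rfl

lemma actp_one (q : Pt k) : actp (1 : PlaneAut k) q = q := by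
  funext i
  show aeval q ((1 : PlaneAut k).symm (X i)) = q i
  rw [show ((1 : PlaneAut k).symm (X i)) = X i from rfl]
  simp

lemma eval_aeval_polynomial {K : Type*} [CommSemiring K] (u : K) (f : Fin 2 → Polynomial K)
    (P : MvPolynomial (Fin 2) K) :
    Polynomial.eval u (MvPolynomial.aeval f P) =
      MvPolynomial.eval (fun i => Polynomial.eval u (f i)) P := by
  induction P using MvPolynomial.induction_on with
  | C c => simp
  | add p q hp hq => simp [hp, hq]
  | mul_X p i hp => simp [hp]

end AuxLemmas

/-- Let `t₀ ∈ k*` not be a root of unity, `a, b > 1` coprime,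
`p = (x_p, y_p)` with `x_p·y_p ≠ 0`, and let `φ : q ↦ (t₀^a·q₁, t₀^b·q₂)`. Then
`O_φ(p) = {(t₀^{na}·x_p, t₀^{nb}·y_p) : n ∈ ℤ}` and its Zariski closure is the curve
`{q : q₁^b·y_p^a = q₂^a·x_p^b}`. -/
theorem stmt_19 (k : Type*) [Field k] [PerfectField k]
    (t₀ : k) (ht₀ : t₀ ≠ 0) (hru : ∀ n : ℕ, 0 < n → t₀ ^ n ≠ 1)
    (a b : ℕ) (ha : 1 < a) (hb : 1 < b) (hab : Nat.Coprime a b)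
    (p : Pt k) (hp : p 0 * p 1 ≠ 0)
    (φ : PlaneAut k)
    (hφ : ∀ q : Pt k, actp φ q = ![emb k (t₀ ^ a) * q 0, emb k (t₀ ^ b) * q 1]) :
    orbAut φ p = {q : Pt k | ∃ n : ℤ,
      q = ![(emb k t₀) ^ (n * (a : ℤ)) * p 0, (emb k t₀) ^ (n * (b : ℤ)) * p 1]} ∧
    zclos (orbAut φ p) = {q : Pt k | q 0 ^ b * p 1 ^ a = q 1 ^ a * p 0 ^ b} := by
  classical
  set K := AlgebraicClosure k with hK
  set t : K := emb k t₀ with ht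
  have htne : t ≠ 0 := by
    intro h
    exact ht₀ ((emb k).injective (by rw [← ht, h, map_zero]))
  have hp0 : p 0 ≠ 0 := left_ne_zero_of_mul hp
  have hp1 : p 1 ≠ 0 := right_ne_zero_of_mul hp
  have htpow : ∀ m : ℕ, 0 < m → t ^ m ≠ 1 := by
    intro m hm h
    exact hru m hm ((emb k).injective (by rw [map_pow, map_one]; exact h))
  have key : ∀ m n : ℕ, m < n → t ^ m ≠ t ^ n := by
    intro m n hmn h
    have h2 : t ^ m * t ^ (n - m) = t ^ m * 1 := by
      rw [mul_one, ← pow_add, Nat.add_sub_cancel' hmn.le, h]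
    exact htpow _ (Nat.sub_pos_of_lt hmn) (mul_left_cancel₀ (pow_ne_zero m htne) h2)
  have tinj : Function.Injective (fun n : ℕ => t ^ n) := by
    intro m n h
    rcases lt_trichotomy m n with h' | h' | h'
    · exact absurd h (key _ _ h')
    · exact h'
    · exact absurd h.symm (key _ _ h')
  have ea : emb k (t₀ ^ a) = t ^ (a : ℤ) := by
    rw [map_pow, zpow_natCast]
  have eb : emb k (t₀ ^ b) = t ^ (b : ℤ) := by
    rw [map_pow, zpow_natCast]
  -- the orbit formula
  have horb : ∀ n : ℤ, actp (φ ^ n) p =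
      ![t ^ (n * (a : ℤ)) * p 0, t ^ (n * (b : ℤ)) * p 1] := by
    intro n
    induction n using Int.induction_on with
    | zero =>
      rw [zpow_zero, actp_one]
      funext i; fin_cases i <;> simp
    | succ i ih =>
      have hstep : φ ^ ((i : ℤ) + 1) = φ * φ ^ (i : ℤ) := by
        rw [add_comm, zpow_add, zpow_one]
      rw [hstep, actp_mul, ih, hφ]
      funext j; fin_cases j
      · simp only [Fin.zero_eta, Fin.isValue, Matrix.cons_val_zero, Matrix.cons_val_one,
          Matrix.head_cons]
        rw [ea, ← mul_assoc, ← zpow_add₀ htne,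
          show (a : ℤ) + (i : ℤ) * a = ((i : ℤ) + 1) * a by ring]
      · simp only [Fin.mk_one, Fin.isValue, Matrix.cons_val_zero, Matrix.cons_val_one,
          Matrix.head_cons]
        rw [eb, ← mul_assoc, ← zpow_add₀ htne,
          show (b : ℤ) + (i : ℤ) * b = ((i : ℤ) + 1) * b by ring]
    | pred i ih =>
      have hstep : φ * φ ^ (-(i : ℤ) - 1) = φ ^ (-(i : ℤ)) := by
        calc φ * φ ^ (-(i : ℤ) - 1) = φ ^ (1 : ℤ) * φ ^ (-(i : ℤ) - 1) := by rw [zpow_one]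
        _ = φ ^ ((1 : ℤ) + (-(i : ℤ) - 1)) := (zpow_add φ _ _).symm
        _ = φ ^ (-(i : ℤ)) := by rw [show (1 : ℤ) + (-(i : ℤ) - 1) = -(i : ℤ) by ring]
      set r : Pt k := actp (φ ^ (-(i : ℤ) - 1)) p with hr
      have hcomp : actp φ r = ![t ^ (-(i:ℤ) * a) * p 0, t ^ (-(i:ℤ) * b) * p 1] := by
        rw [hr, ← actp_mul, hstep, ih]
      rw [hφ r] at hcomp
      have h0 : emb k (t₀ ^ a) * r 0 = t ^ (-(i:ℤ) * a) * p 0 := by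
        have := congrFun hcomp 0; simpa using this
      have h1 : emb k (t₀ ^ b) * r 1 = t ^ (-(i:ℤ) * b) * p 1 := by
        have := congrFun hcomp 1; simpa using this
      have hr0 : r 0 = t ^ ((-(i:ℤ) - 1) * a) * p 0 := by
        apply mul_left_cancel₀ (a := t ^ (a : ℤ)) (zpow_ne_zero _ htne)
        rw [← ea, h0, ea, ← mul_assoc, ← zpow_add₀ htne,
          show (a : ℤ) + (-(i:ℤ) - 1) * a = -(i:ℤ) * a by ring]
      have hr1 : r 1 = t ^ ((-(i:ℤ) - 1) * b) * p 1 := by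
        apply mul_left_cancel₀ (a := t ^ (b : ℤ)) (zpow_ne_zero _ htne)
        rw [← eb, h1, eb, ← mul_assoc, ← zpow_add₀ htne,
          show (b : ℤ) + (-(i:ℤ) - 1) * b = -(i:ℤ) * b by ring]
      funext j; fin_cases j
      · simpa using hr0
      · simpa using hr1
  -- first conjunct
  have part1 : orbAut φ p = {q : Pt k | ∃ n : ℤ,
      q = ![(emb k t₀) ^ (n * (a : ℤ)) * p 0, (emb k t₀) ^ (n * (b : ℤ)) * p 1]} := by
    ext q
    constructor
    · rintro ⟨n, hn⟩
      exact ⟨n, by rw [← hn, horb n]⟩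
    · rintro ⟨n, hn⟩
      exact ⟨n, by rw [horb n, hn]⟩
  refine ⟨part1, ?_⟩
  -- second conjunct
  ext q
  constructor
  · -- zclos ⊆ curve
    intro hq
    have hF : ((X 0) ^ b * C (p 1 ^ a) - (X 1) ^ a * C (p 0 ^ b) :
        MvPolynomial (Fin 2) K) ∈ vanishingIdeal (k := K) (orbAut φ p) := by
      rw [mem_vanishingIdeal_iff]
      rintro x ⟨n, hn⟩
      rw [← hn, horb n]
      simp only [MvPolynomial.aeval_eq_eval, map_sub, map_mul, map_pow, eval_X, eval_C,
        Matrix.cons_val_zero, Matrix.cons_val_one, Matrix.head_cons]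
      have h1 : (t ^ (n * (a:ℤ)) * p 0) ^ b = t ^ (n * (a:ℤ) * (b:ℤ)) * p 0 ^ b := by
        rw [mul_pow, ← zpow_natCast (t ^ (n * (a:ℤ))) b, ← zpow_mul]
      have h2 : (t ^ (n * (b:ℤ)) * p 1) ^ a = t ^ (n * (b:ℤ) * (a:ℤ)) * p 1 ^ a := by
        rw [mul_pow, ← zpow_natCast (t ^ (n * (b:ℤ))) a, ← zpow_mul]
      rw [h1, h2, show n * (a:ℤ) * (b:ℤ) = n * (b:ℤ) * (a:ℤ) by ring]
      ring
    have := mem_zeroLocus_iff.mp (show q ∈ zeroLocus K _ from hq) _ hF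
    simp only [MvPolynomial.aeval_eq_eval, map_sub, map_mul, map_pow, eval_X, eval_C] at this
    exact sub_eq_zero.mp this
  · -- curve ⊆ zclos
    intro hq
    have hq' : q 0 ^ b * p 1 ^ a = q 1 ^ a * p 0 ^ b := hq
    -- parametrize: find s with q 0 = s ^ a * p 0 and q 1 = s ^ b * p 1
    obtain ⟨s, hs0, hs1⟩ : ∃ s : K, q 0 = s ^ a * p 0 ∧ q 1 = s ^ b * p 1 := by
      by_cases h0 : q 0 = 0
      · refine ⟨0, ?_, ?_⟩
        · rw [zero_pow (by omega : a ≠ 0), zero_mul, h0]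
        · have : q 1 ^ a * p 0 ^ b = 0 := by
            rw [← hq', h0, zero_pow (by omega : b ≠ 0), zero_mul]
          have hq1 : q 1 ^ a = 0 :=
            (mul_eq_zero.mp this).resolve_right (pow_ne_zero _ hp0)
          rw [pow_eq_zero_iff (by omega : a ≠ 0)] at hq1
          rw [hq1, zero_pow (by omega : b ≠ 0), zero_mul]
      · have h1 : q 1 ≠ 0 := by
          intro h1
          apply h0
          have : q 0 ^ b * p 1 ^ a = 0 := by
            rw [hq', h1, zero_pow (by omega : a ≠ 0), zero_mul]
          have hq0 : q 0 ^ b = 0 :=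
            (mul_eq_zero.mp this).resolve_right (pow_ne_zero _ hp1)
          exact pow_eq_zero_iff (by omega : b ≠ 0) |>.mp hq0
        set w : K := q 0 / p 0 with hw
        set z : K := q 1 / p 1 with hz
        have hwne : w ≠ 0 := div_ne_zero h0 hp0
        have hzne : z ≠ 0 := div_ne_zero h1 hp1
        have hwz : w ^ (b:ℤ) = z ^ (a:ℤ) := by
          rw [zpow_natCast, zpow_natCast, hw, hz, div_pow, div_pow,
            div_eq_div_iff (pow_ne_zero _ hp0) (pow_ne_zero _ hp1)]
          exact hq'
        obtain ⟨u, v, huv⟩ : IsCoprime (a : ℤ) (b : ℤ) :=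
          Nat.isCoprime_iff_coprime.mpr hab
        refine ⟨w ^ u * z ^ v, ?_, ?_⟩
        · have hsa : (w ^ u * z ^ v) ^ (a:ℤ) = w := by
            calc (w ^ u * z ^ v) ^ (a:ℤ)
                = w ^ (u * (a:ℤ)) * z ^ (v * (a:ℤ)) := by
                  rw [mul_zpow, ← zpow_mul, ← zpow_mul]
              _ = w ^ (u * (a:ℤ)) * (z ^ (a:ℤ)) ^ v := by
                  rw [mul_comm v (a:ℤ), zpow_mul, zpow_mul]
              _ = w ^ (u * (a:ℤ)) * (w ^ (b:ℤ)) ^ v := by rw [hwz]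
              _ = w ^ (u * (a:ℤ) + (b:ℤ) * v) := by
                  rw [← zpow_mul, ← zpow_add₀ hwne]
              _ = w := by
                  rw [show u * (a:ℤ) + (b:ℤ) * v = 1 by linarith [huv], zpow_one]
          rw [← zpow_natCast (w ^ u * z ^ v) a, hsa, hw, div_mul_cancel₀ _ hp0]
        · have hsb : (w ^ u * z ^ v) ^ (b:ℤ) = z := by
            calc (w ^ u * z ^ v) ^ (b:ℤ)
                = w ^ (u * (b:ℤ)) * z ^ (v * (b:ℤ)) := by
                  rw [mul_zpow, ← zpow_mul, ← zpow_mul]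
              _ = (w ^ (b:ℤ)) ^ u * z ^ (v * (b:ℤ)) := by
                  rw [mul_comm u (b:ℤ), zpow_mul, zpow_mul]
              _ = (z ^ (a:ℤ)) ^ u * z ^ (v * (b:ℤ)) := by rw [hwz]
              _ = z ^ ((a:ℤ) * u + v * (b:ℤ)) := by
                  rw [← zpow_mul, ← zpow_add₀ hzne]
              _ = z := by
                  rw [show (a:ℤ) * u + v * (b:ℤ) = 1 by linarith [huv], zpow_one]
          rw [← zpow_natCast (w ^ u * z ^ v) b, hsb, hz, div_mul_cancel₀ _ hp1]
    -- now show q is in the zero locus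
    rw [zclos, mem_zeroLocus_iff]
    intro P hP
    set f : Fin 2 → Polynomial K :=
      ![Polynomial.C (p 0) * Polynomial.X ^ a, Polynomial.C (p 1) * Polynomial.X ^ b] with hf
    set Q : Polynomial K := MvPolynomial.aeval f P with hQ
    have hroot : ∀ n : ℕ, Polynomial.eval (t ^ n) Q = 0 := by
      intro n
      rw [hQ, eval_aeval_polynomial]
      have hpt : (fun i => Polynomial.eval (t ^ n) (f i)) =
          ![t ^ ((n:ℤ) * (a:ℤ)) * p 0, t ^ ((n:ℤ) * (b:ℤ)) * p 1] := by
        funext i; fin_cases i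
        · simp only [hf, Fin.zero_eta, Fin.isValue, Matrix.cons_val_zero, Matrix.cons_val_one,
            Matrix.head_cons, Polynomial.eval_mul, Polynomial.eval_C, Polynomial.eval_pow,
            Polynomial.eval_X]
          rw [← pow_mul, ← zpow_natCast t (n * a)]
          push_cast
          ring
        · simp only [hf, Fin.mk_one, Fin.isValue, Matrix.cons_val_zero, Matrix.cons_val_one,
            Matrix.head_cons, Polynomial.eval_mul, Polynomial.eval_C, Polynomial.eval_pow,
            Polynomial.eval_X]
          rw [← pow_mul, ← zpow_natCast t (n * b)]
          push_cast
          ring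
      rw [hpt]
      exact hP _ ⟨(n : ℤ), horb (n : ℤ)⟩
    have hQ0 : Q = 0 :=
      Polynomial.eq_zero_of_infinite_isRoot Q
        (Set.infinite_of_injective_forall_mem tinj (fun n => hroot n))
    have heq : (fun i => Polynomial.eval s (f i)) = q := by
      funext i; fin_cases i
      · simp only [hf, Fin.zero_eta, Fin.isValue, Matrix.cons_val_zero, Matrix.cons_val_one,
          Matrix.head_cons, Polynomial.eval_mul, Polynomial.eval_C, Polynomial.eval_pow,
          Polynomial.eval_X]
        rw [hs0]; ring
      · simp only [hf, Fin.mk_one, Fin.isValue, Matrix.cons_val_zero, Matrix.cons_val_one,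
          Matrix.head_cons, Polynomial.eval_mul, Polynomial.eval_C, Polynomial.eval_pow,
          Polynomial.eval_X]
        rw [hs1]; ring
    have := eval_aeval_polynomial s f P
    rw [← hQ, hQ0, heq] at this
    simpa using this.symm
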